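/- (Monotonicity of even alternating paths) Let M be a maximum weight matching of G and φ(M) its unfolding in φ(G). Fix a node u of G with copies u^1, …, u^β in φ(G). If there is an even-length alternating path for φ(M) starting from u^i, then for every j with i ≤ j ≤ β there is an even-length alternating path for φ(M) starting from u^j; moreover the paths P_i, P_{i+1}, …, P_β can be chosen pairwise node-disjoint. -/

import Mathlib

open Finset

variable {V : Type*} [Fintype V] [DecidableEq V]

/-- `C` is a (weighted vertex) cover of the bipartite graph on parts `X`, `Y`
with edge weights `w` (where `w x y = 0` means no edge). -/
def IsCover (X Y : Finset V) (w : V → V → ℕ) (C : V → ℕ) : Prop :=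
  ∀ x ∈ X, ∀ y ∈ Y, w x y ≤ C x + C y

/-- The weight of a cover: the sum of its values over all nodes. -/
def coverWt (X Y : Finset V) (C : V → ℕ) : ℕ := ∑ u ∈ X ∪ Y, C u

/-- `M` is a matching of the weighted bipartite graph: a set of pairwise
node-disjoint edges, each going from `X` to `Y` with positive weight. -/
def IsBMatching (X Y : Finset V) (w : V → V → ℕ) (M : Finset (V × V)) : Prop :=
  (∀ e ∈ M, e.1 ∈ X ∧ e.2 ∈ Y ∧ 0 < w e.1 e.2) ∧
  (∀ e ∈ M, ∀ f ∈ M, e ≠ f → e.1 ≠ f.1 ∧ e.2 ≠ f.2)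

/-- The total weight of a matching. -/
def mWt (w : V → V → ℕ) (M : Finset (V × V)) : ℕ := ∑ e ∈ M, w e.1 e.2

/-- Adjacency in the unfolded graph `φ(G)`: the copies `u^i` of a node `u` are the
pairs `(u, i)` with `i ≥ 1`, and for each edge `uv` of weight `β = w u v` the
unfolded graph has the (unweighted) edges `u^i v^{β+1-i}` for `1 ≤ i ≤ β`. -/
def phiAdj (X Y : Finset V) (w : V → V → ℕ) (a b : V × ℕ) : Prop :=
  (a.1 ∈ X ∧ b.1 ∈ Y ∧ 1 ≤ a.2 ∧ 1 ≤ b.2 ∧ 0 < w a.1 b.1 ∧ a.2 + b.2 = w a.1 b.1 + 1) ∨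
  (b.1 ∈ X ∧ a.1 ∈ Y ∧ 1 ≤ b.2 ∧ 1 ≤ a.2 ∧ 0 < w b.1 a.1 ∧ b.2 + a.2 = w b.1 a.1 + 1)

/-- `M` is a matching (set of pairwise node-disjoint edges) of the unweighted
graph with adjacency relation `adj`. -/
def IsUMatching {α : Type*} (adj : α → α → Prop) (M : Finset (α × α)) : Prop :=
  (∀ e ∈ M, adj e.1 e.2) ∧ (∀ e ∈ M, e.1 ≠ e.2) ∧
  (∀ e ∈ M, ∀ f ∈ M, e ≠ f →
    e.1 ≠ f.1 ∧ e.1 ≠ f.2 ∧ e.2 ≠ f.1 ∧ e.2 ≠ f.2)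

/-- The unfolding `φ(M)` of a matching `M` of `G`: each edge `uv ∈ M` of weight
`β` contributes the edges `u^1 v^β, …, u^β v^1`. -/
def phiM (w : V → V → ℕ) (M : Finset (V × V)) : Finset ((V × ℕ) × (V × ℕ)) :=
  M.biUnion fun e =>
    (Finset.Icc 1 (w e.1 e.2)).image fun i => ((e.1, i), (e.2, w e.1 e.2 + 1 - i))

/-- The number of copies of a node `u` in the unfolded graph: the maximum weight
of an edge incident to `u`. -/
def alphaCopies (X Y : Finset V) (w : V → V → ℕ) (u : V) : ℕ :=
  (X ∪ Y).sup fun v => max (w u v) (w v u)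

/-- The (undirected) edge `ab` belongs to the matching `M`. -/
def inMatch {α : Type*} (M : Finset (α × α)) (a b : α) : Prop :=
  (a, b) ∈ M ∨ (b, a) ∈ M

/-- The node `a` is matched by the matching `M`. -/
def matchedBy {α : Type*} (M : Finset (α × α)) (a : α) : Prop :=
  ∃ e ∈ M, e.1 = a ∨ e.2 = a

/-- `p` is an alternating path for the matching `M` in the graph with adjacency
relation `adj`: a nonempty simple path whose edges alternate between `M` and its
complement (edge `i` is in `M` iff `i % 2 = r`, for a fixed phase `r`), and which
contains the matched edge of each of its endpoints that is matched by `M`.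
In particular a zero-length path consists of a single unmatched node. -/
def IsAltPath {α : Type*} (adj : α → α → Prop) (M : Finset (α × α))
    (p : List α) : Prop :=
  p ≠ [] ∧ p.Nodup ∧ List.Chain' adj p ∧
  ∃ r : ℕ,
    (∀ i, ∀ h : i + 1 < p.length,
      (inMatch M (p.get ⟨i, Nat.lt_of_succ_lt h⟩) (p.get ⟨i + 1, h⟩) ↔ i % 2 = r)) ∧
    (∀ h : p ≠ [], matchedBy M (p.head h) → 1 < p.length ∧ r = 0) ∧
    (∀ h : p ≠ [], matchedBy M (p.getLast h) → 1 < p.length ∧ (p.length - 2) % 2 = r)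

/-- There is an even-length (possibly zero-length) alternating path for `M`
starting at `a`.  (A path on `k` nodes has `k - 1` edges, so even length means
an odd number of nodes.) -/
def EvenAltFrom {α : Type*} (adj : α → α → Prop) (M : Finset (α × α))
    (a : α) : Prop :=
  ∃ p : List α, IsAltPath adj M p ∧ p.length % 2 = 1 ∧ ∃ h : p ≠ [], p.head h = a


section AltMono

variable {X Y : Finset V} {w : V → V → ℕ} {M : Finset (V × V)}

lemma mem_phiM_iff {x y : V} {c d : ℕ} :
    ((x, c), (y, d)) ∈ phiM w M ↔ ∃ e ∈ M, x = e.1 ∧ y = e.2 ∧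
      1 ≤ c ∧ 1 ≤ d ∧ c + d = w e.1 e.2 + 1 := by
  simp only [phiM, Finset.mem_biUnion, Finset.mem_image, Finset.mem_Icc, Prod.mk.injEq]
  constructor
  · rintro ⟨e, he, p, ⟨hp1, hp2⟩, ⟨rfl, rfl⟩, rfl, rfl⟩
    exact ⟨e, he, rfl, rfl, hp1, by omega, by omega⟩
  · rintro ⟨e, he, rfl, rfl, h3, h4, h5⟩
    exact ⟨e, he, c, ⟨h3, by omega⟩, ⟨rfl, rfl⟩, rfl, by omega⟩

lemma inMatch_phiM_iff {x y : V} {c d : ℕ} :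
    inMatch (phiM w M) (x, c) (y, d) ↔ ∃ e ∈ M,
      ((x = e.1 ∧ y = e.2) ∨ (x = e.2 ∧ y = e.1)) ∧
      1 ≤ c ∧ 1 ≤ d ∧ c + d = w e.1 e.2 + 1 := by
  unfold inMatch
  rw [mem_phiM_iff, mem_phiM_iff]
  constructor
  · rintro (⟨e, he, h⟩ | ⟨e, he, h⟩)
    · exact ⟨e, he, Or.inl ⟨h.1, h.2.1⟩, h.2.2.1, h.2.2.2.1, h.2.2.2.2⟩
    · exact ⟨e, he, Or.inr ⟨h.2.1, h.1⟩, h.2.2.2.1, h.2.2.1, by omega⟩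
  · rintro ⟨e, he, (⟨h1, h2⟩ | ⟨h1, h2⟩), h3, h4, h5⟩
    · exact Or.inl ⟨e, he, h1, h2, h3, h4, h5⟩
    · exact Or.inr ⟨e, he, h2, h1, h4, h3, by omega⟩

lemma matchedBy_phiM_iff {z : V} {c : ℕ} :
    matchedBy (phiM w M) (z, c) ↔ ∃ e ∈ M, (z = e.1 ∨ z = e.2) ∧ 1 ≤ c ∧ c ≤ w e.1 e.2 := by
  unfold matchedBy
  constructor
  · rintro ⟨⟨⟨x, p⟩, ⟨y, q⟩⟩, hab, h⟩
    rw [mem_phiM_iff] at hab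
    obtain ⟨e, he, rfl, rfl, h3, h4, h5⟩ := hab
    simp only [Prod.mk.injEq] at h
    rcases h with ⟨rfl, rfl⟩ | ⟨rfl, rfl⟩
    · exact ⟨e, he, Or.inl rfl, h3, by omega⟩
    · exact ⟨e, he, Or.inr rfl, h4, by omega⟩
  · rintro ⟨e, he, hz, h1, h2⟩
    rcases hz with rfl | rfl
    · refine ⟨((e.1, c), (e.2, w e.1 e.2 + 1 - c)), ?_, Or.inl rfl⟩
      rw [mem_phiM_iff]; exact ⟨e, he, rfl, rfl, h1, by omega, by omega⟩
    · refine ⟨((e.1, w e.1 e.2 + 1 - c), (e.2, c)), ?_, Or.inr rfl⟩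
      rw [mem_phiM_iff]; exact ⟨e, he, rfl, rfl, by omega, h1, by omega⟩

set_option linter.unusedSectionVars false

lemma M_uniq1 (hM : IsBMatching X Y w M) {x y y' : V}
    (h1 : (x, y) ∈ M) (h2 : (x, y') ∈ M) : y = y' := by
  by_contra hne
  exact (hM.2 _ h1 _ h2 (by simp [hne])).1 rfl

lemma M_uniq2 (hM : IsBMatching X Y w M) {x x' y : V}
    (h1 : (x, y) ∈ M) (h2 : (x', y) ∈ M) : x = x' := by
  by_contra hne
  exact (hM.2 _ h1 _ h2 (by simp [hne])).2 rfl

lemma notXY (hXY : Disjoint X Y) {z : V} (h1 : z ∈ X) (h2 : z ∈ Y) : False :=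
  Finset.disjoint_left.1 hXY h1 h2

/-- Matched copies of a node `z ∈ X` matched in `M` to `y0` are exactly `1..w z y0`. -/
lemma matchedBy_phiM_X (hXY : Disjoint X Y) (hM : IsBMatching X Y w M) {z y0 : V}
    (hz : z ∈ X) (h0 : (z, y0) ∈ M) {c : ℕ} :
    matchedBy (phiM w M) (z, c) ↔ 1 ≤ c ∧ c ≤ w z y0 := by
  rw [matchedBy_phiM_iff]
  constructor
  · rintro ⟨e, he, hze, h1, h2⟩
    rcases hze with rfl | rfl
    · have := M_uniq1 hM h0 (by exact he)
      subst this; exact ⟨h1, h2⟩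
    · exact absurd (hM.1 _ he).2.1 (fun h => notXY hXY hz h)
  · rintro ⟨h1, h2⟩
    exact ⟨(z, y0), h0, Or.inl rfl, h1, h2⟩

/-- Freeness is upward closed in the copy index. -/
lemma matchedBy_phiM_mono (h : matchedBy (phiM w M) (z, c')) (h1 : 1 ≤ c) (h2 : c ≤ c') :
    matchedBy (phiM w M) (z, c) := by
  rw [matchedBy_phiM_iff] at h ⊢
  obtain ⟨e, he, hz, _, hc⟩ := h
  exact ⟨e, he, hz, h1, le_trans h2 hc⟩

/-- An alternating walk in the unfolded graph, recorded by its even nodes `a t`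
(copies of `X`-nodes) and odd nodes `b t` (the matched partners). -/
def XWalk (X : Finset V) (w : V → V → ℕ) (M : Finset (V × V)) (n : ℕ) (a b : ℕ → V × ℕ) : Prop :=
  (∀ t, t ≤ n → (a t).1 ∈ X ∧ 1 ≤ (a t).2) ∧
  (∀ t, t < n →
    ((a t).1, (b t).1) ∈ M ∧ 1 ≤ (b t).2 ∧
    (a t).2 + (b t).2 = w (a t).1 (b t).1 + 1 ∧
    (a (t+1)).2 + (b t).2 = w (a (t+1)).1 (b t).1 + 1 ∧
    ((a (t+1)).1, (b t).1) ∉ M) ∧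
  ¬ matchedBy (phiM w M) (a n)

/-- The interleaved node list of a walk: `a 0, b 0, a 1, b 1, …, a n`. -/
def ilist : ℕ → (ℕ → V × ℕ) → (ℕ → V × ℕ) → List (V × ℕ)
  | 0, a, _ => [a 0]
  | n+1, a, b => a 0 :: b 0 :: ilist n (fun t => a (t+1)) (fun t => b (t+1))

lemma ilist_length (n : ℕ) (a b : ℕ → V × ℕ) : (ilist n a b).length = 2*n+1 := by
  induction n generalizing a b with
  | zero => rfl
  | succ n ih => simp [ilist, ih]; omega

lemma ilist_ne_nil (n : ℕ) (a b : ℕ → V × ℕ) : ilist n a b ≠ [] := by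
  cases n <;> simp [ilist]

lemma ilist_get (n : ℕ) (a b : ℕ → V × ℕ) (k : ℕ) (h : k < (ilist n a b).length) :
    (ilist n a b).get ⟨k, h⟩ = if k % 2 = 0 then a (k/2) else b (k/2) := by
  induction n generalizing a b k with
  | zero =>
    rw [ilist_length] at h
    interval_cases k
    · rfl
  | succ n ih =>
    match k with
    | 0 => rfl
    | 1 => rfl
    | (k+2) =>
      have h' : k < (ilist n (fun t => a (t+1)) (fun t => b (t+1))).length := by
        rw [ilist_length] at h ⊢; omega
      have : (ilist (n+1) a b).get ⟨k+2, h⟩ =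
          (ilist n (fun t => a (t+1)) (fun t => b (t+1))).get ⟨k, h'⟩ := rfl
      rw [this, ih]
      rw [show (k+2) % 2 = k % 2 by omega, show (k+2)/2 = k/2 + 1 by omega]

lemma ilist_head (n : ℕ) (a b : ℕ → V × ℕ) (h : ilist n a b ≠ []) :
    (ilist n a b).head h = a 0 := by
  cases n <;> rfl

lemma ilist_getLast (n : ℕ) (a b : ℕ → V × ℕ) (h : ilist n a b ≠ []) :
    (ilist n a b).getLast h = a n := by
  induction n generalizing a b with
  | zero => rfl
  | succ n ih =>
    have : (ilist (n+1) a b).getLast h =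
        (ilist n (fun t => a (t+1)) (fun t => b (t+1))).getLast (ilist_ne_nil _ _ _) := by
      show (a 0 :: b 0 :: ilist n _ _).getLast _ = _
      rw [List.getLast_cons (by exact List.cons_ne_nil _ _), List.getLast_cons (ilist_ne_nil _ _ _)]
    rw [this, ih]

lemma ilist_mem (n : ℕ) (a b : ℕ → V × ℕ) (z : V × ℕ) :
    z ∈ ilist n a b ↔ (∃ t, t ≤ n ∧ z = a t) ∨ (∃ t, t < n ∧ z = b t) := by
  induction n generalizing a b with
  | zero =>
    simp only [ilist, List.mem_singleton]
    constructor
    · rintro rfl; exact Or.inl ⟨0, le_refl _, rfl⟩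
    · rintro (⟨t, ht, rfl⟩ | ⟨t, ht, rfl⟩)
      · congr; omega
      · omega
  | succ n ih =>
    simp only [ilist, List.mem_cons, ih]
    constructor
    · rintro (rfl | rfl | ⟨t, ht, rfl⟩ | ⟨t, ht, rfl⟩)
      · exact Or.inl ⟨0, by omega, rfl⟩
      · exact Or.inr ⟨0, by omega, rfl⟩
      · exact Or.inl ⟨t+1, by omega, rfl⟩
      · exact Or.inr ⟨t+1, by omega, rfl⟩
    · rintro (⟨t, ht, rfl⟩ | ⟨t, ht, rfl⟩)
      · match t with
        | 0 => exact Or.inl rfl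
        | t+1 => exact Or.inr (Or.inr (Or.inl ⟨t, by omega, rfl⟩))
      · match t with
        | 0 => exact Or.inr (Or.inl rfl)
        | t+1 => exact Or.inr (Or.inr (Or.inr ⟨t, by omega, rfl⟩))

theorem chain'_iff_get_compat {α : Type*} {R : α → α → Prop} {l : List α} : List.Chain' R l ↔
    ∀ (i : ℕ) (h : i < l.length - 1), R (l.get ⟨i, by omega⟩) (l.get ⟨i+1, by omega⟩) := by
  rw [List.Chain', List.isChain_iff_getElem]
  simp only [List.get_eq_getElem]
  constructor <;> intro h i hi <;> exact h i (by omega)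

lemma xwalk_isAltPath (hXY : Disjoint X Y) (hM : IsBMatching X Y w M)
    {n : ℕ} {a b : ℕ → V × ℕ} (hw : XWalk X w M n a b)
    (hinj : ∀ s t, s ≤ n → t ≤ n → (a s).1 = (a t).1 → s = t) :
    IsAltPath (phiAdj X Y w) (phiM w M) (ilist n a b) := by
  obtain ⟨hax, hstep, hfree⟩ := hw
  have hbY : ∀ t, t < n → (b t).1 ∈ Y := fun t ht => (hM.1 _ (hstep t ht).1).2.1
  have hw1 : ∀ t, t < n → 0 < w (a t).1 (b t).1 := fun t ht => (hM.1 _ (hstep t ht).1).2.2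
  have hw2 : ∀ t, t < n → 0 < w (a (t+1)).1 (b t).1 := by
    intro t ht
    have h5 := (hstep t ht).2.2.2.1
    have h6 := (hax (t+1) (by omega)).2
    have h7 := (hstep t ht).2.1
    omega
  have hmatch : ∀ t, t < n → inMatch (phiM w M) (a t) (b t) := by
    intro t ht
    obtain ⟨h1, h2, h3, _, _⟩ := hstep t ht
    rw [show a t = ((a t).1, (a t).2) from rfl, show b t = ((b t).1, (b t).2) from rfl,
      inMatch_phiM_iff]
    exact ⟨_, h1, Or.inl ⟨rfl, rfl⟩, (hax t (by omega)).2, h2, h3⟩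
  have hnonmatch : ∀ t, t < n → ¬ inMatch (phiM w M) (b t) (a (t+1)) := by
    intro t ht hc
    rw [show b t = ((b t).1, (b t).2) from rfl,
      show a (t+1) = ((a (t+1)).1, (a (t+1)).2) from rfl, inMatch_phiM_iff] at hc
    obtain ⟨e, he, hcase, _, _, _⟩ := hc
    rcases hcase with ⟨hb, ha⟩ | ⟨hb, ha⟩
    · exact notXY hXY (hb ▸ (hM.1 _ he).1) (hbY t ht)
    · refine (hstep t ht).2.2.2.2 ?_
      rw [ha, hb]
      simpa using he
  refine ⟨ilist_ne_nil _ _ _, ?_, ?_, 0, ?_, ?_, ?_⟩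
  · rw [List.nodup_iff_injective_get]
    rintro ⟨k, hk⟩ ⟨l, hl⟩ hkl
    have hk' := hk; have hl' := hl
    rw [ilist_length] at hk' hl'
    rw [ilist_get, ilist_get] at hkl
    by_cases hk2 : k % 2 = 0 <;> by_cases hl2 : l % 2 = 0
    · rw [if_pos hk2, if_pos hl2] at hkl
      have : k / 2 = l / 2 := hinj _ _ (by omega) (by omega) (by rw [hkl])
      exact Fin.ext (show k = l by omega)
    · rw [if_pos hk2, if_neg hl2] at hkl
      exact absurd (congrArg Prod.fst hkl)
        (fun hcc => notXY hXY ((hax (k/2) (by omega)).1) (hcc ▸ hbY (l/2) (by omega)))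
    · rw [if_neg hk2, if_pos hl2] at hkl
      exact absurd (congrArg Prod.fst hkl)
        (fun hcc => notXY hXY ((hax (l/2) (by omega)).1) (hcc.symm ▸ hbY (k/2) (by omega)))
    · rw [if_neg hk2, if_neg hl2] at hkl
      have hkn : k / 2 < n := by omega
      have hln : l / 2 < n := by omega
      have hbb : (b (k/2)).1 = (b (l/2)).1 := congrArg Prod.fst hkl
      have hxx : (a (k/2)).1 = (a (l/2)).1 :=
        M_uniq2 hM (hbb ▸ (hstep (k/2) hkn).1) (hstep (l/2) hln).1
      have : k / 2 = l / 2 := hinj _ _ (by omega) (by omega) hxx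
      exact Fin.ext (show k = l by omega)
  · rw [chain'_iff_get_compat]
    intro i hi
    rw [ilist_length] at hi
    rw [ilist_get, ilist_get]
    by_cases hi2 : i % 2 = 0
    · rw [if_pos hi2, if_neg (by omega), show (i+1)/2 = i/2 from by omega]
      have ht : i / 2 < n := by omega
      exact Or.inl ⟨(hax _ (by omega)).1, hbY _ ht, (hax _ (by omega)).2,
        (hstep _ ht).2.1, hw1 _ ht, (hstep _ ht).2.2.1⟩
    · rw [if_neg hi2, if_pos (show (i+1) % 2 = 0 by omega), show (i+1)/2 = i/2 + 1 from by omega]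
      have ht : i / 2 < n := by omega
      exact Or.inr ⟨(hax _ (by omega)).1, hbY _ ht, (hax _ (by omega)).2,
        (hstep _ ht).2.1, hw2 _ ht, (hstep _ ht).2.2.2.1⟩
  · intro i h
    have h' := h
    rw [ilist_length] at h'
    rw [ilist_get, ilist_get]
    by_cases hi2 : i % 2 = 0
    · rw [if_pos hi2, if_neg (by omega), show (i+1)/2 = i/2 from by omega]
      exact iff_of_true (hmatch _ (by omega)) hi2
    · rw [if_neg hi2, if_pos (show (i+1) % 2 = 0 by omega), show (i+1)/2 = i/2 + 1 from by omega]
      exact iff_of_false (hnonmatch _ (by omega)) (by omega)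
  · intro h hmB
    rw [ilist_head] at hmB
    refine ⟨?_, rfl⟩
    rw [ilist_length]
    rcases Nat.eq_zero_or_pos n with rfl | hn
    · exact absurd hmB hfree
    · omega
  · intro h hmB
    rw [ilist_getLast] at hmB
    exact absurd hmB hfree

lemma evenAlt_to_xwalk (hXY : Disjoint X Y) (hM : IsBMatching X Y w M)
    {u : V} {i : ℕ} (huX : u ∈ X)
    (hm : matchedBy (phiM w M) (u, i))
    (h : EvenAltFrom (phiAdj X Y w) (phiM w M) (u, i)) :
    ∃ n a b, XWalk X w M n a b ∧ a 0 = (u, i) := by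
  obtain ⟨p, ⟨hne0, hnd, hch, r, halt, hhead, hlast⟩, hlen, hne, hhd⟩ := h
  have hmh : matchedBy (phiM w M) (p.head hne) := by rw [hhd]; exact hm
  obtain ⟨h1len, hr0⟩ := hhead hne hmh
  subst hr0
  set n := p.length / 2 with hn
  have hplen : p.length = 2*n + 1 := by omega
  have hn1 : 1 ≤ n := by omega
  set a : ℕ → V × ℕ := fun t => p.getD (2*t) (u, i) with ha
  set b : ℕ → V × ℕ := fun t => p.getD (2*t+1) (u, i) with hb
  have hag : ∀ t (ht : 2*t < p.length), a t = p.get ⟨2*t, ht⟩ :=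
    fun t ht => List.getD_eq_getElem _ _ ht
  have hbg : ∀ t (ht : 2*t+1 < p.length), b t = p.get ⟨2*t+1, ht⟩ :=
    fun t ht => List.getD_eq_getElem _ _ ht
  have ha0 : a 0 = (u, i) := by
    rw [hag 0 (by omega), ← hhd, List.head_eq_getElem_zero hne]
    simp [List.get_eq_getElem]
  have hchain := chain'_iff_get_compat.1 hch
  have hEdge : ∀ t, t < n → phiAdj X Y w (b t) (a (t+1)) := by
    intro t ht
    rw [hbg t (by omega), hag (t+1) (by omega)]
    have := hchain (2*t+1) (by omega)
    convert this using 2 <;> simp only [Fin.ext_iff] <;> omega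
  have hMatched : ∀ t, t < n → inMatch (phiM w M) (a t) (b t) := by
    intro t ht
    rw [hag t (by omega), hbg t (by omega)]
    exact (halt (2*t) (by omega)).2 (by omega)
  have hUn : ∀ t, t < n → ¬ inMatch (phiM w M) (b t) (a (t+1)) := by
    intro t ht hc
    rw [hbg t (by omega), hag (t+1) (by omega)] at hc
    have h21 : 2*(t+1) = (2*t+1)+1 := by omega
    have hc' : inMatch (phiM w M) (p.get ⟨2*t+1, by omega⟩) (p.get ⟨(2*t+1)+1, by omega⟩) := by
      convert hc using 2 <;> simp only [Fin.ext_iff] <;> omega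
    have := (halt (2*t+1) (by omega)).1 hc'
    omega
  -- sides
  have hXa : ∀ t, t ≤ n → (a t).1 ∈ X := by
    intro t
    induction t with
    | zero => intro _; rw [ha0]; exact huX
    | succ t ih =>
      intro ht1
      have ht : t < n := by omega
      have hXt := ih (by omega)
      -- b t is on the Y side
      have hbY : (b t).1 ∈ Y := by
        have hmt := hMatched t ht
        rw [show a t = ((a t).1, (a t).2) from rfl, show b t = ((b t).1, (b t).2) from rfl,
          inMatch_phiM_iff] at hmt
        obtain ⟨e, he, hcase, _⟩ := hmt
        rcases hcase with ⟨h1, h2⟩ | ⟨h1, h2⟩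
        · exact h2 ▸ (hM.1 _ he).2.1
        · exact absurd (h1 ▸ (hM.1 _ he).2.1) (fun hy => notXY hXY hXt hy)
      rcases hEdge t ht with ⟨hx, _⟩ | ⟨hx, _⟩
      · exact absurd hx (fun hx => notXY hXY hx hbY)
      · exact hx
  have hbY : ∀ t, t < n → (b t).1 ∈ Y := by
    intro t ht
    have hmt := hMatched t ht
    rw [show a t = ((a t).1, (a t).2) from rfl, show b t = ((b t).1, (b t).2) from rfl,
      inMatch_phiM_iff] at hmt
    obtain ⟨e, he, hcase, _⟩ := hmt
    rcases hcase with ⟨h1, h2⟩ | ⟨h1, h2⟩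
    · exact h2 ▸ (hM.1 _ he).2.1
    · exact absurd (h1 ▸ (hM.1 _ he).2.1) (fun hy => notXY hXY (hXa t (by omega)) hy)
  have hEdge' : ∀ t, t < n → (a (t+1)).1 ∈ X ∧ 1 ≤ (a (t+1)).2 ∧ 1 ≤ (b t).2 ∧
      (a (t+1)).2 + (b t).2 = w (a (t+1)).1 (b t).1 + 1 := by
    intro t ht
    rcases hEdge t ht with ⟨hx, _⟩ | ⟨hx, hy, h1, h2, h3, h4⟩
    · exact absurd hx (fun hx => notXY hXY hx (hbY t ht))
    · exact ⟨hx, h1, h2, by omega⟩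
  refine ⟨n, a, b, ⟨?_, ?_, ?_⟩, ha0⟩
  · intro t ht
    refine ⟨hXa t ht, ?_⟩
    match t with
    | 0 =>
      rw [ha0]
      rw [matchedBy_phiM_iff] at hm
      obtain ⟨e, _, _, h1, _⟩ := hm
      exact h1
    | (t+1) => exact (hEdge' t (by omega)).2.1
  · intro t ht
    have hmt := hMatched t ht
    rw [show a t = ((a t).1, (a t).2) from rfl, show b t = ((b t).1, (b t).2) from rfl,
      inMatch_phiM_iff] at hmt
    obtain ⟨e, he, hcase, hp1, hp2, hsum⟩ := hmt
    rcases hcase with ⟨h1, h2⟩ | ⟨h1, h2⟩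
    · refine ⟨?_, hp2, ?_, (hEdge' t ht).2.2.2, ?_⟩
      · rw [h1, h2]; simpa using he
      · rw [h1, h2]; exact hsum
      · intro hmem
        refine hUn t ht ?_
        rw [show b t = ((b t).1, (b t).2) from rfl,
          show a (t+1) = ((a (t+1)).1, (a (t+1)).2) from rfl, inMatch_phiM_iff]
        exact ⟨((a (t+1)).1, (b t).1), hmem, Or.inr ⟨rfl, rfl⟩,
          (hEdge' t ht).2.2.1, (hEdge' t ht).2.1, by
            have := (hEdge' t ht).2.2.2
            show (b t).2 + (a (t+1)).2 = w (a (t+1)).1 (b t).1 + 1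
            omega⟩
    · exact absurd (h1 ▸ (hM.1 _ he).2.1) (fun hy => notXY hXY (hXa t (by omega)) hy)
  · intro hc
    have hgl : p.getLast hne = a n := by
      rw [hag n (by omega), List.getLast_eq_getElem]
      simp only [List.get_eq_getElem, hplen, Nat.add_sub_cancel]
    obtain ⟨_, hpar⟩ := hlast hne (hgl ▸ hc)
    rw [hplen] at hpar
    omega

/-- The exchange argument: an alternating walk cannot revisit a base node at a
strictly larger copy index, else swapping the alternating cycle in `G` would
produce a heavier matching. -/
lemma no_increasing_repeat (hXY : Disjoint X Y) (hM : IsBMatching X Y w M)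
    (hMmax : ∀ M' : Finset (V × V), IsBMatching X Y w M' → mWt w M' ≤ mWt w M)
    {n : ℕ} {a b : ℕ → V × ℕ} (hw : XWalk X w M n a b)
    {s t : ℕ} (hst : s < t) (htn : t ≤ n)
    (hbase : (a s).1 = (a t).1) (hinc : (a s).2 < (a t).2)
    (hdist : ∀ r q, s ≤ r → r < q → q ≤ t → ¬(r = s ∧ q = t) → (a r).1 ≠ (a q).1) :
    False := by
  obtain ⟨hax, hstep, hfree⟩ := hw
  have hbY : ∀ r, r < n → (b r).1 ∈ Y := fun r hr => (hM.1 _ (hstep r hr).1).2.1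
  -- injectivity facts
  have hxinj : ∀ r ∈ Finset.Ico s t, ∀ q ∈ Finset.Ico s t, (a r).1 = (a q).1 → r = q := by
    intro r hr q hq h
    simp only [Finset.mem_Ico] at hr hq
    by_contra hne
    rcases Nat.lt_or_ge r q with hlt | hge
    · exact hdist r q (by omega) hlt (by omega) (by omega) h
    · exact hdist q r (by omega) (by omega) (by omega) (by omega) h.symm
  have hyinj : ∀ r ∈ Finset.Ico s t, ∀ q ∈ Finset.Ico s t, (b r).1 = (b q).1 → r = q := by
    intro r hr q hq h
    simp only [Finset.mem_Ico] at hr hq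
    have h1 := (hstep r (by omega)).1
    have h2 := (hstep q (by omega)).1
    exact hxinj r (by simp [Finset.mem_Ico]; omega) q (by simp [Finset.mem_Ico]; omega)
      (M_uniq2 hM (h ▸ h1) h2)
  have hxinj' : ∀ r ∈ Finset.Ico s t, ∀ q ∈ Finset.Ico s t, (a (r+1)).1 = (a (q+1)).1 → r = q := by
    intro r hr q hq h
    simp only [Finset.mem_Ico] at hr hq
    by_contra hne
    rcases Nat.lt_or_ge r q with hlt | hge
    · exact hdist (r+1) (q+1) (by omega) (by omega) (by omega) (by omega) h
    · exact hdist (q+1) (r+1) (by omega) (by omega) (by omega) (by omega) h.symm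
  set D : Finset (V × V) := (Finset.Ico s t).image (fun r => ((a r).1, (b r).1)) with hD
  set A' : Finset (V × V) := (Finset.Ico s t).image (fun r => ((a (r+1)).1, (b r).1)) with hA
  have hDM : D ⊆ M := by
    intro e he
    simp only [hD, Finset.mem_image] at he
    obtain ⟨r, hr, rfl⟩ := he
    simp only [Finset.mem_Ico] at hr
    exact (hstep r (by omega)).1
  have hAnotM : ∀ e ∈ A', e ∉ M := by
    intro e he
    simp only [hA, Finset.mem_image] at he
    obtain ⟨r, hr, rfl⟩ := he
    simp only [Finset.mem_Ico] at hr
    exact (hstep r (by omega)).2.2.2.2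
  -- a node used by the cycle is not used by M \ D
  have hMD1 : ∀ e ∈ M \ D, ∀ r ∈ Finset.Ico s t, e.1 ≠ (a r).1 := by
    intro e he r hr hc
    rw [Finset.mem_sdiff] at he
    have hrn : r < n := by simp only [Finset.mem_Ico] at hr; omega
    have : e.2 = (b r).1 := M_uniq1 hM (by rw [← hc] at *; exact (show (e.1, e.2) ∈ M by simpa using he.1)) (hc ▸ (hstep r hrn).1)
    refine he.2 ?_
    simp only [hD, Finset.mem_image]
    exact ⟨r, hr, by rw [← hc, ← this]⟩
  have hMD2 : ∀ e ∈ M \ D, ∀ r ∈ Finset.Ico s t, e.2 ≠ (b r).1 := by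
    intro e he r hr hc
    rw [Finset.mem_sdiff] at he
    have hrn : r < n := by simp only [Finset.mem_Ico] at hr; omega
    have : e.1 = (a r).1 := M_uniq2 hM (by rw [← hc] at *; exact (show (e.1, e.2) ∈ M by simpa using he.1)) (hc ▸ (hstep r hrn).1)
    refine he.2 ?_
    simp only [hD, Finset.mem_image]
    exact ⟨r, hr, by rw [← hc, ← this]⟩
  -- first components of cycle edges lie in the a-bases of [s,t)
  have hAfst : ∀ r ∈ Finset.Ico s t, ∃ q ∈ Finset.Ico s t, (a (r+1)).1 = (a q).1 := by
    intro r hr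
    simp only [Finset.mem_Ico] at hr
    rcases Nat.lt_or_ge (r+1) t with h1 | h1
    · exact ⟨r+1, by simp [Finset.mem_Ico]; omega, rfl⟩
    · have : r + 1 = t := by omega
      exact ⟨s, by simp [Finset.mem_Ico]; omega, by rw [this, ← hbase]⟩
  set M' : Finset (V × V) := (M \ D) ∪ A' with hM'
  have hdisjMD : Disjoint (M \ D) A' := by
    rw [Finset.disjoint_right]
    intro e he
    intro hc
    exact hAnotM e he (Finset.mem_sdiff.1 hc).1
  have hM'match : IsBMatching X Y w M' := by
    constructor
    · intro e he
      rw [hM', Finset.mem_union] at he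
      rcases he with he | he
      · exact hM.1 _ (Finset.mem_sdiff.1 he).1
      · simp only [hA, Finset.mem_image] at he
        obtain ⟨r, hr, rfl⟩ := he
        simp only [Finset.mem_Ico] at hr
        have h5 := (hstep r (by omega)).2.2.2.1
        have h2 := (hstep r (by omega)).2.1
        have hp := (hax (r+1) (by omega)).2
        exact ⟨(hax (r+1) (by omega)).1, hbY r (by omega), by simp only; omega⟩
    · intro e he f hf hef
      rw [hM', Finset.mem_union] at he hf
      rcases he with he | he <;> rcases hf with hf | hf
      · exact hM.2 _ (Finset.mem_sdiff.1 he).1 _ (Finset.mem_sdiff.1 hf).1 hef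
      · simp only [hA, Finset.mem_image] at hf
        obtain ⟨r, hr, rfl⟩ := hf
        obtain ⟨q, hq, hqr⟩ := hAfst r hr
        constructor
        · rw [hqr]; exact hMD1 e he q hq
        · exact hMD2 e he r hr
      · simp only [hA, Finset.mem_image] at he
        obtain ⟨r, hr, rfl⟩ := he
        obtain ⟨q, hq, hqr⟩ := hAfst r hr
        constructor
        · rw [hqr]; exact fun hc => hMD1 f hf q hq hc.symm
        · exact fun hc => hMD2 f hf r hr hc.symm
      · simp only [hA, Finset.mem_image] at he hf
        obtain ⟨r, hr, rfl⟩ := he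
        obtain ⟨q, hq, rfl⟩ := hf
        have hrq : r ≠ q := fun hc => hef (by rw [hc])
        exact ⟨fun hc => hrq (hxinj' r hr q hq hc), fun hc => hrq (hyinj r hr q hq hc)⟩
  -- weight computation
  have hsumD : ∑ e ∈ D, w e.1 e.2 = ∑ r ∈ Finset.Ico s t, w (a r).1 (b r).1 := by
    rw [hD, Finset.sum_image]
    intro r hr q hq h
    exact hxinj r hr q hq (Prod.mk.inj h).1
  have hsumA : ∑ e ∈ A', w e.1 e.2 = ∑ r ∈ Finset.Ico s t, w (a (r+1)).1 (b r).1 := by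
    rw [hA, Finset.sum_image]
    intro r hr q hq h
    exact hyinj r hr q hq (Prod.mk.inj h).2
  have htele : ∀ t', s ≤ t' → t' ≤ t →
      ∑ r ∈ Finset.Ico s t', w (a (r+1)).1 (b r).1 + (a s).2 =
      ∑ r ∈ Finset.Ico s t', w (a r).1 (b r).1 + (a t').2 := by
    intro t'
    induction t' with
    | zero => intro h1 h2; simp only [show s = 0 by omega]; simp
    | succ t' ih =>
      intro h1 h2
      rcases Nat.lt_or_ge s (t'+1) with hlt | hge
      · have hst' : s ≤ t' := by omega
        have := ih hst' (by omega)
        rw [Finset.sum_Ico_succ_top hst', Finset.sum_Ico_succ_top hst']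
        have h3 := (hstep t' (by omega)).2.2.1
        have h5 := (hstep t' (by omega)).2.2.2.1
        omega
      · have : s = t' + 1 := by omega
        simp [this]
  have htele' := htele t (by omega) (le_refl t)
  have hsum1 : ∑ e ∈ M \ D, w e.1 e.2 + ∑ e ∈ D, w e.1 e.2 = mWt w M :=
    Finset.sum_sdiff hDM
  have hsum2 : mWt w M' = ∑ e ∈ M \ D, w e.1 e.2 + ∑ e ∈ A', w e.1 e.2 :=
    Finset.sum_union hdisjMD
  have hle := hMmax M' hM'match
  omega

lemma xwalk_tail {n : ℕ} {a b : ℕ → V × ℕ} (hw : XWalk X w M n a b) {t : ℕ} (ht : t ≤ n) :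
    XWalk X w M (n - t) (fun r => a (t + r)) (fun r => b (t + r)) := by
  obtain ⟨hax, hstep, hfree⟩ := hw
  refine ⟨fun r hr => hax (t + r) (by omega), fun r hr => ?_, ?_⟩
  · have := hstep (t + r) (by omega)
    simpa [show t + (r + 1) = (t + r) + 1 by omega] using this
  · simpa [show t + (n - t) = n by omega] using hfree

lemma xwalk_shift_trunc (hXY : Disjoint X Y) (hM : IsBMatching X Y w M)
    {n : ℕ} {a b : ℕ → V × ℕ} (hw : XWalk X w M n a b) (δ : ℕ) :
    ∃ n', n' ≤ n ∧ XWalk X w M n' (fun r => ((a r).1, (a r).2 + δ))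
      (fun r => ((b r).1, (b r).2 - δ)) := by
  classical
  obtain ⟨hax, hstep, hfree⟩ := hw
  have hex : ∃ r, ¬ matchedBy (phiM w M) ((a r).1, (a r).2 + δ) ∧ r ≤ n := by
    refine ⟨n, fun hc => hfree ?_, le_refl n⟩
    have := matchedBy_phiM_mono hc (hax n (le_refl n)).2 (by omega)
    simpa using this
  set n' := Nat.find hex with hn'
  obtain ⟨hfree', hn'n⟩ := Nat.find_spec hex
  rw [← hn'] at hfree' hn'n
  have hmatched : ∀ r, r < n' → matchedBy (phiM w M) ((a r).1, (a r).2 + δ) := by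
    intro r hr
    by_contra hc
    exact Nat.find_min hex (show r < Nat.find hex from hn' ▸ hr) ⟨hc, by omega⟩
  -- for r < n', the shifted copy is within the matched range
  have hrange : ∀ r, r < n' → (a r).2 + δ ≤ w (a r).1 (b r).1 := by
    intro r hr
    have hm := hmatched r hr
    rw [matchedBy_phiM_iff] at hm
    obtain ⟨e, he, hz, h1, h2⟩ := hm
    have hrn : r < n := by omega
    have haxr := (hax r (by omega)).1
    rcases hz with hz | hz
    · have he' : ((a r).1, e.2) ∈ M := by rw [hz]; simpa using he
      have := M_uniq1 hM he' (hstep r hrn).1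
      rw [← hz, this] at h2
      exact h2
    · exact absurd ((hM.1 _ he).2.1) (fun hy => notXY hXY haxr (hz ▸ hy))
  refine ⟨n', hn'n, ⟨fun r hr => ⟨(hax r (by omega)).1, by
    have := (hax r (by omega)).2
    simp only
    omega⟩, fun r hr => ?_, hfree'⟩⟩
  have hrn : r < n := by omega
  obtain ⟨h1, h2, h3, h5, h6⟩ := hstep r hrn
  have h4 := hrange r hr
  refine ⟨h1, by simp only; omega, by simp only; omega, by simp only; omega, h6⟩

lemma xwalk_dedup (hXY : Disjoint X Y) (hM : IsBMatching X Y w M)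
    (hMmax : ∀ M' : Finset (V × V), IsBMatching X Y w M' → mWt w M' ≤ mWt w M) :
    ∀ n : ℕ, ∀ a b : ℕ → V × ℕ, XWalk X w M n a b →
    ∃ n' a' b', XWalk X w M n' a' b' ∧ a' 0 = a 0 ∧
      (∀ s t, s ≤ n' → t ≤ n' → (a' s).1 = (a' t).1 → s = t) := by
  intro n
  induction n using Nat.strong_induction_on with
  | _ n IH =>
  intro a b hw
  by_cases hrep : ∃ g, ∃ s t : ℕ, s < t ∧ t ≤ n ∧ t - s = g ∧ (a s).1 = (a t).1
  · classical
    obtain ⟨s, t, hst, htn, hgap, hbase⟩ := Nat.find_spec hrep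
    have hmin : ∀ r q : ℕ, r < q → q ≤ n → (a r).1 = (a q).1 → Nat.find hrep ≤ q - r :=
      fun r q h1 h2 h3 => Nat.find_min' hrep ⟨r, q, h1, h2, rfl, h3⟩
    rcases Nat.lt_or_ge (a s).2 (a t).2 with hlt | hge
    · exact absurd (no_increasing_repeat hXY hM hMmax hw hst htn hbase hlt
        (by
          intro r q hr hq hqt hne hbb
          have h1 := hmin r q hq (by omega) hbb
          omega)) (fun h => h)
    · -- splice out the segment [s, t) , shifting the tail up by δ
      set δ := (a s).2 - (a t).2 with hδdef
      have htail := xwalk_tail hw htn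
      obtain ⟨n₂, hn₂, hw₂⟩ := xwalk_shift_trunc hXY hM htail δ
      have hw₂' : XWalk X w M n₂ (fun r => ((a (t+r)).1, (a (t+r)).2 + δ))
          (fun r => ((b (t+r)).1, (b (t+r)).2 - δ)) := hw₂
      set a₂ : ℕ → V × ℕ := fun r => ((a (t+r)).1, (a (t+r)).2 + δ) with ha₂
      set b₂ : ℕ → V × ℕ := fun r => ((b (t+r)).1, (b (t+r)).2 - δ) with hb₂
      have hkey : a₂ 0 = a s := by
        rw [ha₂]
        refine Prod.ext ?_ ?_
        · show (a (t+0)).1 = (a s).1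
          rw [Nat.add_zero]; exact hbase.symm
        · show (a (t+0)).2 + δ = (a s).2
          rw [Nat.add_zero]; omega
      set A : ℕ → V × ℕ := fun r => if r < s then a r else a₂ (r - s) with hA
      set B : ℕ → V × ℕ := fun r => if r < s then b r else b₂ (r - s) with hB
      have hAlt : ∀ r, r < s → A r = a r := fun r hr => by rw [hA]; simp [if_pos hr]
      have hBlt : ∀ r, r < s → B r = b r := fun r hr => by rw [hB]; simp [if_pos hr]
      have hAge : ∀ r, s ≤ r → A r = a₂ (r - s) := fun r hr => by
        rw [hA]; simp [if_neg (by omega : ¬ r < s)]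
      have hBge : ∀ r, s ≤ r → B r = b₂ (r - s) := fun r hr => by
        rw [hB]; simp [if_neg (by omega : ¬ r < s)]
      obtain ⟨hax, hstep, _⟩ := hw
      obtain ⟨hax₂, hstep₂, hfree₂⟩ := hw₂'
      have hWA : XWalk X w M (s + n₂) A B := by
        refine ⟨?_, ?_, ?_⟩
        · intro r hr
          rcases Nat.lt_or_ge r s with h | h
          · rw [hAlt r h]; exact hax r (by omega)
          · rw [hAge r h]; exact hax₂ (r - s) (by omega)
        · intro r hr
          rcases Nat.lt_or_ge (r+1) s with h | h
          · rw [hAlt r (by omega), hBlt r (by omega), hAlt (r+1) h]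
            exact hstep r (by omega)
          · rcases Nat.lt_or_ge r s with h2 | h2
            · -- r + 1 = s : junction
              have hrs : r + 1 = s := by omega
              rw [hAlt r (by omega), hBlt r (by omega), hAge (r+1) h,
                show r + 1 - s = 0 by omega, hkey, ← hrs]
              exact hstep r (by omega)
            · rw [hAge r h2, hBge r h2, hAge (r+1) (by omega),
                show r + 1 - s = (r - s) + 1 by omega]
              exact hstep₂ (r - s) (by omega)
        · rw [hAge (s + n₂) (by omega), show s + n₂ - s = n₂ by omega]
          exact hfree₂
      have hA0 : A 0 = a 0 := by
        rcases Nat.lt_or_ge 0 s with h | h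
        · exact hAlt 0 h
        · rw [hAge 0 h, show 0 - s = 0 by omega, hkey]
          congr 1
          omega
      obtain ⟨n', a', b', hw', h0', hinj'⟩ := IH (s + n₂) (by omega) A B hWA
      exact ⟨n', a', b', hw', by rw [h0', hA0], hinj'⟩
  · push_neg at hrep
    refine ⟨n, a, b, hw, rfl, ?_⟩
    intro s t hs ht hb
    by_contra hne
    rcases Nat.lt_or_ge s t with h | h
    · exact hrep (t - s) s t h ht rfl hb
    · exact hrep (s - t) t s (by omega) hs rfl hb.symm

lemma singleton_altPath {adj : V × ℕ → V × ℕ → Prop} {N : Finset ((V × ℕ) × (V × ℕ))}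
    {z : V × ℕ} (hfree : ¬ matchedBy N z) : IsAltPath adj N [z] := by
  refine ⟨by simp, by simp, List.isChain_singleton _, 0, ?_, ?_, ?_⟩
  · intro i h
    simp at h
  · intro h hm
    exact absurd hm hfree
  · intro h hm
    exact absurd hm hfree

theorem main_X (hXY : Disjoint X Y) (hM : IsBMatching X Y w M)
    (hMmax : ∀ M' : Finset (V × V), IsBMatching X Y w M' → mWt w M' ≤ mWt w M)
    (u : V) (huX : u ∈ X) (i : ℕ) (hi1 : 1 ≤ i)
    (hstart : EvenAltFrom (phiAdj X Y w) (phiM w M) (u, i)) :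
    ∃ P : ℕ → List (V × ℕ),
      (∀ j, i ≤ j →
        IsAltPath (phiAdj X Y w) (phiM w M) (P j) ∧ (P j).length % 2 = 1 ∧
        ∃ h : P j ≠ [], (P j).head h = (u, j)) ∧
      (∀ j k, i ≤ j → j < k → List.Disjoint (P j) (P k)) := by
  classical
  by_cases hm : matchedBy (phiM w M) (u, i)
  · -- u^i is matched
    obtain ⟨e0, he0, hu0, _, _⟩ := matchedBy_phiM_iff.1 hm
    have hue : u = e0.1 := by
      rcases hu0 with h | h
      · exact h
      · exact absurd ((hM.1 _ he0).2.1) (fun hy => notXY hXY huX (h ▸ hy))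
    have hedge : (u, e0.2) ∈ M := by rw [hue]; simpa using he0
    set β0 := w u e0.2 with hβ0
    have hmchar : ∀ c, matchedBy (phiM w M) (u, c) ↔ 1 ≤ c ∧ c ≤ β0 :=
      fun c => matchedBy_phiM_X hXY hM huX hedge
    have hiβ : i ≤ β0 := ((hmchar i).1 hm).2
    obtain ⟨n0, a0, b0, hw0, ha00⟩ := evenAlt_to_xwalk hXY hM huX hm hstart
    obtain ⟨n, a, b, hw, ha0, hinj⟩ := xwalk_dedup hXY hM hMmax n0 a0 b0 hw0
    have ha0' : a 0 = (u, i) := by rw [ha0, ha00]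
    choose N hNle hNwalk using fun j => xwalk_shift_trunc hXY hM hw (j - i)
    set P : ℕ → List (V × ℕ) := fun j =>
      if j ≤ β0 then
        ilist (N j) (fun r => ((a r).1, (a r).2 + (j - i))) (fun r => ((b r).1, (b r).2 - (j - i)))
      else [(u, j)] with hP
    have hax := hw.1
    have hstep := hw.2.1
    have hbY : ∀ r, r < n → (b r).1 ∈ Y := fun r hr => (hM.1 _ (hstep r hr).1).2.1
    -- membership characterization for the shifted paths
    have hmem : ∀ j, j ≤ β0 → ∀ z, z ∈ P j →
        (∃ r, r ≤ N j ∧ z = ((a r).1, (a r).2 + (j - i))) ∨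
        (∃ r, r < N j ∧ z = ((b r).1, (b r).2 - (j - i))) := by
      intro j hj z hz
      rw [hP] at hz
      simp only [if_pos hj] at hz
      exact (ilist_mem _ _ _ _).1 hz
    refine ⟨P, ?_, ?_⟩
    · intro j hj
      by_cases hjβ : j ≤ β0
      · have hpath := xwalk_isAltPath hXY hM (hNwalk j)
          (by
            intro s t hs ht hbb
            exact hinj s t (by have := hNle j; omega) (by have := hNle j; omega) hbb)
        rw [hP]
        simp only [if_pos hjβ]
        refine ⟨hpath, by rw [ilist_length]; omega, ilist_ne_nil _ _ _, ?_⟩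
        rw [ilist_head]
        show ((a 0).1, (a 0).2 + (j - i)) = (u, j)
        rw [ha0']
        show (u, i + (j - i)) = (u, j)
        congr 1
        omega
      · have hfree : ¬ matchedBy (phiM w M) (u, j) := by
          rw [hmchar]
          omega
        rw [hP]
        simp only [if_neg hjβ]
        exact ⟨singleton_altPath hfree, by simp, by simp, rfl⟩
    · intro j k hij hjk z hzj hzk
      by_cases hjβ : j ≤ β0 <;> by_cases hkβ : k ≤ β0
      · -- both shifted walks
        rcases hmem j hjβ z hzj with ⟨r, hr, h₁⟩ | ⟨r, hr, h₁⟩ <;>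
          rcases hmem k hkβ z hzk with ⟨q, hq, h₂⟩ | ⟨q, hq, h₂⟩ <;>
          have heq := h₁.symm.trans h₂
        · have h1 : (a r).1 = (a q).1 := (Prod.mk.inj heq).1
          have : r = q := hinj r q (by have := hNle j; omega) (by have := hNle k; omega) h1
          subst this
          have h2 := (Prod.mk.inj heq).2
          omega
        · exact notXY hXY (hax r (by have := hNle j; omega)).1
            ((Prod.mk.inj heq).1 ▸ hbY q (by have := hNle k; omega))
        · exact notXY hXY (hax q (by have := hNle k; omega)).1
            ((Prod.mk.inj heq).1.symm ▸ hbY r (by have := hNle j; omega))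
        · have h1 : (b r).1 = (b q).1 := (Prod.mk.inj heq).1
          have hxx : (a r).1 = (a q).1 :=
            M_uniq2 hM (h1 ▸ (hstep r (by have := hNle j; omega)).1)
              (hstep q (by have := hNle k; omega)).1
          have : r = q := hinj r q (by have := hNle j; omega) (by have := hNle k; omega) hxx
          subst this
          have h2 := (Prod.mk.inj heq).2
          have hp1 : 1 ≤ (b r).2 - (j - i) := ((hNwalk j).2.1 r hr).2.1
          have hp2 : 1 ≤ (b r).2 - (k - i) := ((hNwalk k).2.1 r hq).2.1
          omega
      · -- j shifted, k singleton
        have : z = (u, k) := by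
          rw [hP] at hzk
          simp only [if_neg hkβ] at hzk
          simpa using hzk
        subst this
        rcases hmem j hjβ _ hzj with ⟨r, hr, heq⟩ | ⟨r, hr, heq⟩
        · have h1 : (a r).1 = (a 0).1 := by
            rw [ha0']
            exact (Prod.mk.inj heq).1.symm
          have hr0 : r = 0 := hinj r 0 (by have := hNle j; omega) (by omega) h1
          subst hr0
          have h2 := (Prod.mk.inj heq).2
          have hi2 : (a 0).2 = i := by rw [ha0']
          omega
        · exact notXY hXY huX ((Prod.mk.inj heq).1 ▸ hbY r (by have := hNle j; omega))
      · omega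
      · -- both singletons
        rw [hP] at hzj hzk
        simp only [if_neg hjβ] at hzj
        simp only [if_neg hkβ] at hzk
        simp only [List.mem_singleton] at hzj hzk
        rw [hzj] at hzk
        have := (Prod.mk.inj hzk).2
        omega
  · -- u^i is free: all larger copies are free too; use zero-length paths
    refine ⟨fun j => [(u, j)], ?_, ?_⟩
    · intro j hj
      have hfree : ¬ matchedBy (phiM w M) (u, j) :=
        fun hc => hm (matchedBy_phiM_mono hc hi1 hj)
      exact ⟨singleton_altPath hfree, by simp, by simp, rfl⟩
    · intro j k hij hjk z hzj hzk
      simp only [List.mem_singleton] at hzj hzk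
      rw [hzj] at hzk
      have := (Prod.mk.inj hzk).2
      omega

lemma swap_mem {e : V × V} :
    e ∈ M.image Prod.swap ↔ (e.2, e.1) ∈ M := by
  constructor
  · intro h
    obtain ⟨f, hf, rfl⟩ := Finset.mem_image.1 h
    simpa using hf
  · intro h
    exact Finset.mem_image.2 ⟨(e.2, e.1), h, by simp⟩

lemma IsBMatching_swap (hM : IsBMatching X Y w M) :
    IsBMatching Y X (fun x y => w y x) (M.image Prod.swap) := by
  constructor
  · intro e he
    rw [swap_mem] at he
    obtain ⟨h1, h2, h3⟩ := hM.1 _ he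
    exact ⟨h2, h1, h3⟩
  · intro e he f hf hef
    rw [swap_mem] at he hf
    have hne : (e.2, e.1) ≠ (f.2, f.1) := by
      intro hc
      obtain ⟨h1, h2⟩ := Prod.mk.inj hc
      exact hef (Prod.ext h2 h1)
    obtain ⟨h1, h2⟩ := hM.2 _ he _ hf hne
    exact ⟨h2, h1⟩

lemma mWt_swap : mWt (fun x y => w y x) (M.image Prod.swap) = mWt w M := by
  unfold mWt
  rw [Finset.sum_image (fun x _ y _ h => Prod.swap_injective h)]
  rfl

lemma phiAdj_swap {a b : V × ℕ} :
    phiAdj Y X (fun x y => w y x) a b ↔ phiAdj X Y w a b := by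
  have hw : ∀ x y : V, (fun x y => w y x) x y = w y x := fun _ _ => rfl
  unfold phiAdj
  constructor
  · rintro (⟨h1, h2, h3, h4, h5, h6⟩ | ⟨h1, h2, h3, h4, h5, h6⟩)
    · rw [hw] at h5 h6
      exact Or.inr ⟨h2, h1, h4, h3, h5, by omega⟩
    · rw [hw] at h5 h6
      exact Or.inl ⟨h2, h1, h4, h3, h5, by omega⟩
  · rintro (⟨h1, h2, h3, h4, h5, h6⟩ | ⟨h1, h2, h3, h4, h5, h6⟩)
    · exact Or.inr ⟨h2, h1, h4, h3, by rw [hw]; exact h5, by rw [hw]; omega⟩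
    · exact Or.inl ⟨h2, h1, h4, h3, by rw [hw]; exact h5, by rw [hw]; omega⟩

lemma inMatch_swap {a b : V × ℕ} :
    inMatch (phiM (fun x y => w y x) (M.image Prod.swap)) a b ↔ inMatch (phiM w M) a b := by
  rw [show a = (a.1, a.2) from rfl, show b = (b.1, b.2) from rfl,
    inMatch_phiM_iff, inMatch_phiM_iff]
  constructor
  · rintro ⟨e, he, hc, h1, h2, h3⟩
    rw [swap_mem] at he
    refine ⟨(e.2, e.1), he, ?_, h1, h2, by simpa using h3⟩
    rcases hc with ⟨hx, hy⟩ | ⟨hx, hy⟩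
    · exact Or.inr ⟨hx, hy⟩
    · exact Or.inl ⟨hx, hy⟩
  · rintro ⟨e, he, hc, h1, h2, h3⟩
    refine ⟨(e.2, e.1), swap_mem.2 (by simpa using he), ?_, h1, h2, by simpa using h3⟩
    rcases hc with ⟨hx, hy⟩ | ⟨hx, hy⟩
    · exact Or.inr ⟨hx, hy⟩
    · exact Or.inl ⟨hx, hy⟩

lemma matchedBy_swap {a : V × ℕ} :
    matchedBy (phiM (fun x y => w y x) (M.image Prod.swap)) a ↔ matchedBy (phiM w M) a := by
  rw [show a = (a.1, a.2) from rfl, matchedBy_phiM_iff, matchedBy_phiM_iff]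
  constructor
  · rintro ⟨e, he, hc, h1, h2⟩
    rw [swap_mem] at he
    exact ⟨(e.2, e.1), he, hc.symm, h1, by simpa using h2⟩
  · rintro ⟨e, he, hc, h1, h2⟩
    exact ⟨(e.2, e.1), swap_mem.2 (by simpa using he), hc.symm, h1, by simpa using h2⟩

lemma isAltPath_congr {α : Type*} {adj adj' : α → α → Prop} {M₁ M₂ : Finset (α × α)}
    (hadj : ∀ a b, adj a b ↔ adj' a b)
    (h1 : ∀ a b, inMatch M₁ a b ↔ inMatch M₂ a b)
    (h2 : ∀ a, matchedBy M₁ a ↔ matchedBy M₂ a)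
    {p : List α} (h : IsAltPath adj M₁ p) : IsAltPath adj' M₂ p := by
  obtain ⟨hne, hnd, hch, r, halt, hh, hl⟩ := h
  refine ⟨hne, hnd, List.IsChain.imp (fun a b hab => (hadj a b).1 hab) hch, r, ?_, ?_, ?_⟩
  · intro i hlen
    exact (h1 _ _).symm.trans (halt i hlen)
  · intro hne' hm
    exact hh hne' ((h2 _).2 hm)
  · intro hne' hm
    exact hl hne' ((h2 _).2 hm)

lemma evenAltFrom_congr {α : Type*} {adj adj' : α → α → Prop} {M₁ M₂ : Finset (α × α)}
    (hadj : ∀ a b, adj a b ↔ adj' a b)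
    (h1 : ∀ a b, inMatch M₁ a b ↔ inMatch M₂ a b)
    (h2 : ∀ a, matchedBy M₁ a ↔ matchedBy M₂ a)
    {z : α} (h : EvenAltFrom adj M₁ z) : EvenAltFrom adj' M₂ z := by
  obtain ⟨p, hp, hlen, hne, hhd⟩ := h
  exact ⟨p, isAltPath_congr hadj h1 h2 hp, hlen, hne, hhd⟩

end AltMono

/-- Monotonicity of even alternating paths in the unfolded graph: if there is an
even-length alternating path for `φ(M)` starting at the copy `u^i`, then there
are pairwise node-disjoint even-length alternating paths starting at `u^j` for
all `i ≤ j ≤ β`, where `β` is the number of copies of `u`. -/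
theorem even_alt_path_monotone
    (X Y : Finset V) (hXY : Disjoint X Y) (w : V → V → ℕ)
    (M : Finset (V × V)) (hM : IsBMatching X Y w M)
    (hMmax : ∀ M' : Finset (V × V), IsBMatching X Y w M' → mWt w M' ≤ mWt w M)
    (u : V) (hu : u ∈ X ∪ Y) (i : ℕ) (hi1 : 1 ≤ i) (hiβ : i ≤ alphaCopies X Y w u)
    (hstart : EvenAltFrom (phiAdj X Y w) (phiM w M) (u, i)) :
    ∃ P : ℕ → List (V × ℕ),
      (∀ j, i ≤ j → j ≤ alphaCopies X Y w u →
        IsAltPath (phiAdj X Y w) (phiM w M) (P j) ∧ (P j).length % 2 = 1 ∧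
        ∃ h : P j ≠ [], (P j).head h = (u, j)) ∧
      (∀ j k, i ≤ j → j < k → k ≤ alphaCopies X Y w u →
        List.Disjoint (P j) (P k)) := by
  rcases Finset.mem_union.1 hu with huX | huY
  · obtain ⟨P, h1, h2⟩ := main_X hXY hM hMmax u huX i hi1 hstart
    exact ⟨P, fun j hj _ => h1 j hj, fun j k hj hjk _ => h2 j k hj hjk⟩
  · have hM' := IsBMatching_swap hM
    have hMmax' : ∀ M'' : Finset (V × V), IsBMatching Y X (fun x y => w y x) M'' →
        mWt (fun x y => w y x) M'' ≤ mWt (fun x y => w y x) (M.image Prod.swap) := by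
      intro M'' h''
      have hbm : IsBMatching X Y w (M''.image Prod.swap) := IsBMatching_swap h''
      have e1 : mWt w (M''.image Prod.swap) = mWt (fun x y => w y x) M'' :=
        mWt_swap (w := fun x y => w y x) (M := M'')
      have e2 : mWt (fun x y => w y x) (M.image Prod.swap) = mWt w M :=
        mWt_swap (w := w) (M := M)
      rw [← e1, e2]
      exact hMmax _ hbm
    have hstart' : EvenAltFrom (phiAdj Y X (fun x y => w y x))
        (phiM (fun x y => w y x) (M.image Prod.swap)) (u, i) :=
      evenAltFrom_congr (fun a b => (phiAdj_swap (a := a) (b := b)).symm)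
        (fun a b => (inMatch_swap (a := a) (b := b)).symm)
        (fun a => (matchedBy_swap (a := a)).symm) hstart
    obtain ⟨P, h1, h2⟩ := main_X hXY.symm hM' hMmax' u huY i hi1 hstart'
    refine ⟨P, ?_, fun j k hj hjk _ => h2 j k hj hjk⟩
    intro j hj _
    obtain ⟨hpath, hlen, hhd⟩ := h1 j hj
    exact ⟨isAltPath_congr (fun a b => phiAdj_swap) (fun a b => inMatch_swap)
      (fun a => matchedBy_swap) hpath, hlen, hhd⟩
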